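/- Let G be a graph, let Γ be a group acting on V(G) by graph automorphisms, let H be the quotient graph G/Γ, and let π : V(G) → V(H) denote the quotient map x ↦ Γx. If the action of Γ on V(G) is free, then π has the disjoint tree-lifting property. -/

import Mathlib

open MeasureTheory

namespace Percolation

variable {V : Type*} {W : Type*}

/-- The ball of radius `k` around `x` for the graph distance. -/
def ball (G : SimpleGraph V) (x : V) (k : ℕ) : Set V := {y | G.dist x y ≤ k}

/-- The sphere of radius `k` around `x` for the graph distance. -/
def sphere (G : SimpleGraph V) (x : V) (k : ℕ) : Set V := {y | G.dist x y = k}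

/-- A graph is locally finite if every vertex has finitely many neighbours. -/
def LocallyFinite' (G : SimpleGraph V) : Prop := ∀ v : V, (G.neighborSet v).Finite

/-- A graph has bounded degree if there is a uniform finite bound on the number of
neighbours of any vertex. -/
def BoundedDegree (G : SimpleGraph V) : Prop :=
  ∃ D : ℕ, ∀ v : V, (G.neighborSet v).Finite ∧ (G.neighborSet v).ncard ≤ D

/-- A graph is quasi-transitive if the action of its automorphism group on its vertices
has finitely many orbits. -/
def QuasiTransitive (G : SimpleGraph V) : Prop :=
  ∃ S : Set V, S.Finite ∧ ∀ v : V, ∃ s ∈ S, ∃ φ : G ≃g G, φ s = v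

/-- The graph of `ω`-open edges of a percolation configuration `ω` on `G`. -/
def openGraph (G : SimpleGraph V) (ω : G.edgeSet → Bool) : SimpleGraph V where
  Adj x y := ∃ h : G.Adj x y, ω ⟨s(x, y), (SimpleGraph.mem_edgeSet G).mpr h⟩ = true
  symm := by
    constructor
    rintro x y ⟨h, hw⟩
    refine ⟨h.symm, ?_⟩
    have heq : (⟨s(y, x), (SimpleGraph.mem_edgeSet G).mpr h.symm⟩ : G.edgeSet)
        = ⟨s(x, y), (SimpleGraph.mem_edgeSet G).mpr h⟩ := Subtype.ext (Sym2.eq_swap)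
    rw [heq]; exact hw
  loopless := by constructor; rintro x ⟨h, -⟩; exact G.irrefl h

/-- The open cluster of the vertex `x` in the configuration `ω`. -/
def cluster (G : SimpleGraph V) (ω : G.edgeSet → Bool) (x : V) : Set V :=
  {y | (openGraph G ω).Reachable x y}

/-- The open cluster of a set `A` of vertices in the configuration `ω`. -/
def clusterOf (G : SimpleGraph V) (ω : G.edgeSet → Bool) (A : Set V) : Set V :=
  {y | ∃ x ∈ A, (openGraph G ω).Reachable x y}

/-- The event that some open path intersects both `A` and `B`. -/
def connectedEvent (G : SimpleGraph V) (A B : Set V) : Set (G.edgeSet → Bool) :=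
  {ω | ∃ a ∈ A, ∃ b ∈ B, (openGraph G ω).Reachable a b}

/-- `μ` is the Bernoulli product measure `⊗_{i ∈ ι} Ber(p)` on `ι → Bool`:
a probability measure giving every finite cylinder event its product probability. -/
def IsBernoulliProduct {ι : Type*} (p : ℝ) (μ : Measure (ι → Bool)) : Prop :=
  IsProbabilityMeasure μ ∧
    ∀ (t : Finset ι) (f : ι → Bool),
      μ {ω | ∀ i ∈ t, ω i = f i} =
        ∏ i ∈ t, ENNReal.ofReal (if f i then p else 1 - p)

/-- `μ` is the product measure `Ber(p)^{⊗ι} ⊗ Ber(s)^{⊗κ}` on `(ι → Bool) × (κ → Bool)`. -/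
def IsBernoulliPair {ι κ : Type*} (p s : ℝ)
    (μ : Measure ((ι → Bool) × (κ → Bool))) : Prop :=
  IsProbabilityMeasure μ ∧
    ∀ (t : Finset ι) (u : Finset κ) (f : ι → Bool) (g : κ → Bool),
      μ {c | (∀ i ∈ t, c.1 i = f i) ∧ (∀ j ∈ u, c.2 j = g j)} =
        (∏ i ∈ t, ENNReal.ofReal (if f i then p else 1 - p)) *
          ∏ j ∈ u, ENNReal.ofReal (if g j then s else 1 - s)

/-- The critical parameter `p_c` of a graph: the infimum of those `p ∈ [0,1]` for which
Bernoulli(p) bond percolation produces an infinite cluster with positive probability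
(with the convention that it equals `1` when no such `p` exists). -/
noncomputable def pc (G : SimpleGraph V) : ℝ :=
  sInf ({p : ℝ | p ∈ Set.Icc (0 : ℝ) 1 ∧
    ∀ μ : Measure (G.edgeSet → Bool), IsBernoulliProduct p μ →
      0 < μ {ω | ∃ x : V, (cluster G ω x).Infinite}} ∪ {1})

/-- The uniqueness parameter `p_u` of a graph: the infimum of those `p ∈ [0,1]` for which
Bernoulli(p) bond percolation produces exactly one infinite cluster almost surely
(with the convention that it equals `1` when no such `p` exists). -/
noncomputable def pu (G : SimpleGraph V) : ℝ :=
  sInf ({p : ℝ | p ∈ Set.Icc (0 : ℝ) 1 ∧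
    ∀ μ : Measure (G.edgeSet → Bool), IsBernoulliProduct p μ →
      μ {ω | ∃! C : (openGraph G ω).ConnectedComponent, C.supp.Infinite} = 1} ∪ {1})

/-- A weak covering map: 1-Lipschitz for the graph distances, and every edge at `π x`
lifts to an edge at `x`. -/
structure IsWeakCover (G : SimpleGraph V) (H : SimpleGraph W) (π : V → W) : Prop where
  lipschitz : ∀ x y : V, H.dist (π x) (π y) ≤ G.dist x y
  lift : ∀ x : V, ∀ u : W, H.Adj (π x) u → ∃ y : V, G.Adj x y ∧ π y = u

/-- A strong covering map: 1-Lipschitz for the graph distances, and every edge at `π x`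
lifts to a *unique* edge at `x`. -/
structure IsStrongCover (G : SimpleGraph V) (H : SimpleGraph W) (π : V → W) : Prop where
  lipschitz : ∀ x y : V, H.dist (π x) (π y) ≤ G.dist x y
  lift : ∀ x : V, ∀ u : W, H.Adj (π x) u → ∃! y : V, G.Adj x y ∧ π y = u

/-- `π` has tame fibres: for some `R`, every vertex has another vertex of its fibre
within distance `R`. -/
def TameFibres (G : SimpleGraph V) (π : V → W) : Prop :=
  ∃ R : ℕ, ∀ x : V, ∃ y : V, π x = π y ∧ 0 < G.dist x y ∧ G.dist x y ≤ R

/-- `π` has bounded fibres: fibres have uniformly bounded diameter. -/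
def BoundedFibres (G : SimpleGraph V) (π : V → W) : Prop :=
  ∃ K : ℕ, ∀ x y : V, π x = π y → G.dist x y ≤ K

/-- `T'` is a lift of the subtree `T` through `π`: a subtree of `G` such that `π` induces
a graph isomorphism from `T'` onto `T`. -/
def IsLift (G : SimpleGraph V) (H : SimpleGraph W) (π : V → W)
    (T : H.Subgraph) (T' : G.Subgraph) : Prop :=
  T'.coe.IsTree ∧ Set.BijOn π T'.verts T.verts ∧
    ∀ x y : V, x ∈ T'.verts → y ∈ T'.verts → (T'.Adj x y ↔ T.Adj (π x) (π y))

/-- The disjoint tree-lifting property of `π`. -/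
def HasDisjointTreeLifting (G : SimpleGraph V) (H : SimpleGraph W) (π : V → W) : Prop :=
  ∀ T : H.Subgraph, T.coe.IsTree →
    ∀ x y : V, x ≠ y → π x = π y → π x ∈ T.verts →
      ∃ Tx Ty : G.Subgraph, IsLift G H π T Tx ∧ IsLift G H π T Ty ∧
        x ∈ Tx.verts ∧ y ∈ Ty.verts ∧ Disjoint Tx.verts Ty.verts

/-- All edges with both endpoints in the ball `B_r(u)` are `ω`-open. -/
def fullyOpen (H : SimpleGraph V) (r : ℕ) (ω : H.edgeSet → Bool) (u : V) : Prop :=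
  ∀ e : H.edgeSet, (∀ z ∈ (e : Sym2 V), H.dist u z ≤ r) → ω e = true

/-- The enhancement step: add all vertices `v` at distance exactly `r+1` from a vertex
`u` of `S` whose `r`-ball is fully open and with `α u = 1`. -/
def enhance (H : SimpleGraph V) (r : ℕ) (ω : H.edgeSet → Bool) (α : V → Bool)
    (S : Set V) : Set V :=
  S ∪ {v | ∃ u ∈ S, H.dist u v = r + 1 ∧ fullyOpen H r ω u ∧ α u = true}

/-- The sequence `C_n` of the enhanced exploration started from `A`: odd steps spread
along open clusters, even steps perform the enhancement. -/
def enhSeq (H : SimpleGraph V) (r : ℕ) (ω : H.edgeSet → Bool) (α : V → Bool)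
    (A : Set V) : ℕ → Set V
  | 0 => A
  | n + 1 =>
      if n % 2 = 0 then clusterOf H ω (enhSeq H r ω α A n)
      else enhance H r ω α (enhSeq H r ω α A n)

/-- The enhanced cluster `C_A(ω, α)`. -/
def enhCluster (H : SimpleGraph V) (r : ℕ) (ω : H.edgeSet → Bool) (α : V → Bool)
    (A : Set V) : Set V := ⋃ n, enhSeq H r ω α A n

open scoped Classical in
/-- Set the state of the edge `e` to `b`. -/
noncomputable def flipE (H : SimpleGraph V) (ω : H.edgeSet → Bool) (e : H.edgeSet)
    (b : Bool) : H.edgeSet → Bool := Function.update ω e b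

open scoped Classical in
/-- Set the state of the vertex `v` to `b`. -/
noncomputable def flipV (α : V → Bool) (v : V) (b : Bool) : V → Bool :=
  Function.update α v b

/-- The edge `e` is p-pivotal for the event `E` in the configuration `c`. -/
def PPivotal (H : SimpleGraph V) (E : Set ((H.edgeSet → Bool) × (V → Bool)))
    (e : H.edgeSet) (c : (H.edgeSet → Bool) × (V → Bool)) : Prop :=
  (flipE H c.1 e true, c.2) ∈ E ∧ (flipE H c.1 e false, c.2) ∉ E

/-- The vertex `z` is s-pivotal for the event `E` in the configuration `c`. -/
def SPivotal (H : SimpleGraph V) (E : Set ((H.edgeSet → Bool) × (V → Bool)))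
    (z : V) (c : (H.edgeSet → Bool) × (V → Bool)) : Prop :=
  (c.1, flipV c.2 z true) ∈ E ∧ (c.1, flipV c.2 z false) ∉ E

/-- For an edge `e = {x,y}`, the set `B_R(e) = B_R(x) ∪ B_R(y)`. -/
def edgeBall (H : SimpleGraph V) (e : H.edgeSet) (R : ℕ) : Set V :=
  {z | ∃ w ∈ (e : Sym2 V), H.dist w z ≤ R}

/-- The connected component of `x` inside the subgraph of `G` induced by `S`
(as a subset of the vertices of `G`). -/
def compIn (G : SimpleGraph V) (S : Set V) (x : V) : Set V :=
  {y | ∃ w : G.Walk x y, ∀ z ∈ w.support, z ∈ S}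

/-- The quotient graph `G/Γ`: vertices are the orbits, two distinct orbits being adjacent
iff some edge of `G` intersects both. -/
def quotientGraph (G : SimpleGraph V) (Γ : Type*) [Group Γ] [MulAction Γ V] :
    SimpleGraph (Quotient (MulAction.orbitRel Γ V)) where
  Adj a b := a ≠ b ∧ ∃ x y : V, G.Adj x y ∧
      Quotient.mk (MulAction.orbitRel Γ V) x = a ∧ Quotient.mk (MulAction.orbitRel Γ V) y = b
  symm := by constructor; rintro a b ⟨hne, x, y, hxy, hx, hy⟩; exact ⟨hne.symm, y, x, hxy.symm, hy, hx⟩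
  loopless := by constructor; rintro a ⟨hne, -⟩; exact hne rfl

open scoped Classical in
/-- The configuration `ω_L`: agrees with `ω` on edges inside `B_L(o)`, closed elsewhere. -/
noncomputable def truncE (H : SimpleGraph V) (o : V) (L : ℕ) (ω : H.edgeSet → Bool) :
    H.edgeSet → Bool :=
  fun e => if ∀ z ∈ (e : Sym2 V), H.dist o z ≤ L then ω e else false

/-- The configuration `α_L`: agrees with `α` on vertices of `B_L(o)`, `0` elsewhere. -/
noncomputable def truncV (H : SimpleGraph V) (o : V) (L : ℕ) (α : V → Bool) : V → Bool :=
  fun v => if H.dist o v ≤ L then α v else false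

/-- `B` is `r`-nice: finite, non-empty, and every vertex outside of `B` belongs to some
`r`-ball avoiding `B`. -/
def RNice (H : SimpleGraph V) (r : ℕ) (B : Set V) : Prop :=
  B.Finite ∧ B.Nonempty ∧ ∀ u ∉ B, ∃ v : V, u ∈ ball H v r ∧ ∀ w ∈ ball H v r, w ∉ B

section Aux
variable {S : Type*}

def liftEnd {Q : SimpleGraph S} (st : V → S → V) :
    ∀ {a b : S}, Q.Walk a b → V → V
  | _, _, SimpleGraph.Walk.nil, z => z
  | _, _, @SimpleGraph.Walk.cons _ _ _ c _ _ p, z => liftEnd st p (st z c)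

@[simp] lemma liftEnd_nil {Q : SimpleGraph S} (st : V → S → V) {a : S} (z : V) :
    liftEnd st (SimpleGraph.Walk.nil : Q.Walk a a) z = z := rfl

@[simp] lemma liftEnd_cons {Q : SimpleGraph S} (st : V → S → V) {a c b : S}
    (h : Q.Adj a c) (p : Q.Walk c b) (z : V) :
    liftEnd st (SimpleGraph.Walk.cons h p) z = liftEnd st p (st z c) := rfl

lemma liftEnd_concat {Q : SimpleGraph S} (st : V → S → V) {a b c : S}
    (p : Q.Walk a b) (h : Q.Adj b c) (z : V) :
    liftEnd st (p.concat h) z = st (liftEnd st p z) c := by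
  induction p generalizing z with
  | nil => simp [SimpleGraph.Walk.concat_nil]
  | cons h' p ih => rw [SimpleGraph.Walk.concat_cons, liftEnd_cons, liftEnd_cons, ih]

lemma isPath_concat' {G : SimpleGraph V} {a b c : V} {p : G.Walk a b}
    (hp : p.IsPath) (h : G.Adj b c) (hc : c ∉ p.support) : (p.concat h).IsPath := by
  rw [← SimpleGraph.Walk.isPath_reverse_iff, SimpleGraph.Walk.reverse_concat]
  exact (hp.reverse).cons (by simpa [SimpleGraph.Walk.support_reverse] using hc)

end Aux

/-- **Lemma (free actions give disjoint tree-lifting).**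
If a group `Γ` acts freely on `V(G)` by graph automorphisms, then the quotient map
`x ↦ Γx` onto the quotient graph `G/Γ` has the disjoint tree-lifting property. -/
theorem quotientMap_hasDisjointTreeLifting {V : Type*} {Γ : Type*} [Group Γ]
    [MulAction Γ V] (G : SimpleGraph V)
    (hconn : G.Connected) (hlf : LocallyFinite' G)
    (haut : ∀ (g : Γ) (x y : V), G.Adj (g • x) (g • y) ↔ G.Adj x y)
    (hfree : ∀ g : Γ, g ≠ 1 → ∀ x : V, g • x ≠ x) :
    HasDisjointTreeLifting G (quotientGraph G Γ)
      (fun x => Quotient.mk (MulAction.orbitRel Γ V) x) := by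
  classical
  intro T ht x y hxy hπxy hmem
  -- notation
  have hlift : ∀ (z : V) (b : Quotient (MulAction.orbitRel Γ V)),
      (quotientGraph G Γ).Adj (Quotient.mk (MulAction.orbitRel Γ V) z) b →
      ∃ w : V, G.Adj z w ∧ Quotient.mk (MulAction.orbitRel Γ V) w = b := by
    intro z b hadj
    obtain ⟨-, x0, y0, hxy0, hx0, hy0⟩ := hadj
    obtain ⟨g, hg⟩ : x0 ∈ MulAction.orbit Γ z := Quotient.exact hx0
    have hz : z = g⁻¹ • x0 := by rw [← hg, inv_smul_smul]
    refine ⟨g⁻¹ • y0, ?_, ?_⟩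
    · rw [hz]; exact (haut g⁻¹ x0 y0).mpr hxy0
    · rw [← hy0]
      exact Quotient.sound (MulAction.mem_orbit y0 g⁻¹)
  -- choose step function
  have hstep : ∀ (z : V) (u' : ↥T.verts), ∃ w : V,
      (quotientGraph G Γ).Adj (Quotient.mk (MulAction.orbitRel Γ V) z) ↑u' →
        G.Adj z w ∧ Quotient.mk (MulAction.orbitRel Γ V) w = ↑u' := by
    intro z u'
    by_cases h : (quotientGraph G Γ).Adj (Quotient.mk (MulAction.orbitRel Γ V) z) ↑u'
    · obtain ⟨w, hw⟩ := hlift z ↑u' h; exact ⟨w, fun _ => hw⟩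
    · exact ⟨z, fun h' => absurd h' h⟩
  choose st hstep using hstep
  have hst : ∀ (z : V) (u u' : ↥T.verts), Quotient.mk (MulAction.orbitRel Γ V) z = ↑u →
      T.coe.Adj u u' →
      G.Adj z (st z u') ∧ Quotient.mk (MulAction.orbitRel Γ V) (st z u') = ↑u' := by
    intro z u u' hz hadj
    refine hstep z u' ?_
    rw [hz]
    exact T.adj_sub hadj
  -- unique paths from the root
  let r : ↥T.verts := ⟨_, hmem⟩
  choose pth pth_isPath pth_unique using fun u => ht.existsUnique_path r u
  let f : ↥T.verts → V := fun u => liftEnd st (pth u) x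
  have hinv : ∀ {a b : ↥T.verts} (p : T.coe.Walk a b) (z : V),
      Quotient.mk (MulAction.orbitRel Γ V) z = ↑a →
      Quotient.mk (MulAction.orbitRel Γ V) (liftEnd st p z) = ↑b := by
    intro a b p
    induction p with
    | nil => intro z hz; simpa using hz
    | cons h p ih =>
      intro z hz
      rw [liftEnd_cons]
      exact ih _ (hst z _ _ hz h).2
  have hπf : ∀ u, Quotient.mk (MulAction.orbitRel Γ V) (f u) = ↑u :=
    fun u => hinv (pth u) x rfl
  -- adjacent vertices of the tree have adjacent lifts
  have hcase : ∀ (u u' : ↥T.verts) (h : T.coe.Adj u u'), u' ∈ (pth u).support →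
      pth u = (pth u').concat h.symm := by
    intro u u' h hm
    have hq : ((pth u).takeUntil u' hm).IsPath := (pth_isPath u).takeUntil hm
    have hq' : (pth u).takeUntil u' hm = pth u' := pth_unique u' _ hq
    have hu : u ∉ ((pth u).takeUntil u' hm).support := by
      intro hu
      have hnd := (pth_isPath u).support_nodup
      rw [← SimpleGraph.Walk.take_spec (pth u) hm, SimpleGraph.Walk.support_append] at hnd
      refine (List.nodup_append'.mp hnd).2.2 hu ?_
      have hend := SimpleGraph.Walk.end_mem_support ((pth u).dropUntil u' hm)
      rw [SimpleGraph.Walk.support_eq_cons] at hend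
      rcases List.mem_cons.mp hend with h1 | h2
      · exact absurd h1 h.ne
      · exact h2
    have hcp : ((pth u').concat h.symm).IsPath := by
      have := isPath_concat' hq h.symm hu
      rwa [hq'] at this
    exact (pth_unique u _ hcp).symm
  have hadjf : ∀ (u u' : ↥T.verts), T.coe.Adj u u' → G.Adj (f u) (f u') := by
    intro u u' h
    by_cases hm : u' ∈ (pth u).support
    · have he : f u = st (f u') u := by
        show liftEnd st (pth u) x = _
        rw [hcase u u' h hm, liftEnd_concat]
      rw [he]
      exact ((hst (f u') u' u (hπf u') h.symm).1).symm
    · have hcp : ((pth u).concat h).IsPath := isPath_concat' (pth_isPath u) h hm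
      have he : f u' = st (f u) u' := by
        show liftEnd st (pth u') x = _
        rw [← pth_unique u' _ hcp, liftEnd_concat]
      rw [he]
      exact (hst (f u) u u' (hπf u) h).1
  -- the generic lift construction
  have key : ∀ (f' : ↥T.verts → V),
      (∀ u, Quotient.mk (MulAction.orbitRel Γ V) (f' u) = ↑u) →
      (∀ u u', T.coe.Adj u u' → G.Adj (f' u) (f' u')) →
      ∃ T' : G.Subgraph,
        IsLift G (quotientGraph G Γ) (fun v => Quotient.mk (MulAction.orbitRel Γ V) v) T T' ∧
        T'.verts = Set.range f' := by
    intro f' hπ' hadj'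
    have finj' : Function.Injective f' := fun u u' h =>
      Subtype.ext (by rw [← hπ' u, ← hπ' u', h])
    refine ⟨{ verts := Set.range f'
              Adj := fun z w => ∃ u u', T.coe.Adj u u' ∧ z = f' u ∧ w = f' u'
              adj_sub := by rintro z w ⟨u, u', h, rfl, rfl⟩; exact hadj' u u' h
              edge_vert := by rintro z w ⟨u, u', h, rfl, rfl⟩; exact ⟨u, rfl⟩
              symm := by constructor; rintro z w ⟨u, u', h, rfl, rfl⟩; exact ⟨u', u, h.symm, rfl, rfl⟩ },
          ⟨?_, ⟨?_, ?_, ?_⟩, ?_⟩, rfl⟩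
    · -- IsTree via iso
      have e : T.coe ≃g SimpleGraph.Subgraph.coe
          { verts := Set.range f'
            Adj := fun z w => ∃ u u', T.coe.Adj u u' ∧ z = f' u ∧ w = f' u'
            adj_sub := by rintro z w ⟨u, u', h, rfl, rfl⟩; exact hadj' u u' h
            edge_vert := by rintro z w ⟨u, u', h, rfl, rfl⟩; exact ⟨u, rfl⟩
            symm := by constructor; rintro z w ⟨u, u', h, rfl, rfl⟩; exact ⟨u', u, h.symm, rfl, rfl⟩ } := by
        refine ⟨Equiv.ofInjective f' finj', ?_⟩
        intro u u'
        simp only [Equiv.ofInjective_apply, SimpleGraph.Subgraph.coe_adj]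
        constructor
        · rintro ⟨v, v', h, hv, hv'⟩
          obtain rfl := finj' hv
          obtain rfl := finj' hv'
          exact h
        · intro h; exact ⟨u, u', h, rfl, rfl⟩
      constructor
      · exact (e.connected_iff).mp ht.isConnected
      · intro v c hc
        exact ht.IsAcyclic (c.map e.symm.toHom)
          ((SimpleGraph.Walk.map_isCycle_iff_of_injective e.symm.injective).mpr hc)
    · -- MapsTo
      rintro z ⟨u, rfl⟩
      show Quotient.mk (MulAction.orbitRel Γ V) (f' u) ∈ T.verts
      rw [hπ' u]; exact u.2
    · -- InjOn
      rintro z ⟨u, rfl⟩ w ⟨u', rfl⟩ h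
      have : (u : Quotient (MulAction.orbitRel Γ V)) = ↑u' := by
        rw [← hπ' u, ← hπ' u']; exact h
      rw [Subtype.ext this]
    · -- SurjOn
      intro w hw
      exact ⟨f' ⟨w, hw⟩, ⟨⟨w, hw⟩, rfl⟩, hπ' ⟨w, hw⟩⟩
    · -- adjacency correspondence
      rintro z w ⟨u, rfl⟩ ⟨u', rfl⟩
      constructor
      · rintro ⟨v, v', h, hv, hv'⟩
        obtain rfl := finj' hv
        obtain rfl := finj' hv'
        show T.Adj (Quotient.mk (MulAction.orbitRel Γ V) (f' u))
          (Quotient.mk (MulAction.orbitRel Γ V) (f' u'))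
        rw [hπ' u, hπ' u']
        exact h
      · intro h
        refine ⟨u, u', ?_, rfl, rfl⟩
        have h2 : T.Adj (Quotient.mk (MulAction.orbitRel Γ V) (f' u))
            (Quotient.mk (MulAction.orbitRel Γ V) (f' u')) := h
        rwa [hπ' u, hπ' u'] at h2
  -- the two lifts
  obtain ⟨g, hg⟩ : x ∈ MulAction.orbit Γ y := Quotient.exact hπxy
  have hy' : y = g⁻¹ • x := by rw [← hg, inv_smul_smul]
  have hgne : g⁻¹ ≠ 1 := by
    intro h1
    rw [h1, one_smul] at hy'
    exact hxy hy'.symm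
  have hfr : f r = x := by
    show liftEnd st (pth r) x = x
    rw [← pth_unique r SimpleGraph.Walk.nil SimpleGraph.Walk.IsPath.nil]
    rfl
  obtain ⟨Tx, hTx, hTxv⟩ := key f hπf hadjf
  obtain ⟨Ty, hTy, hTyv⟩ := key (fun u => g⁻¹ • f u)
    (fun u => by
      rw [← hπf u]
      exact Quotient.sound (MulAction.mem_orbit (f u) g⁻¹))
    (fun u u' h => (haut g⁻¹ (f u) (f u')).mpr (hadjf u u' h))
  refine ⟨Tx, Ty, hTx, hTy, ?_, ?_, ?_⟩
  · rw [hTxv]; exact ⟨r, hfr⟩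
  · rw [hTyv]
    refine ⟨r, ?_⟩
    show g⁻¹ • f r = y
    rw [hfr, ← hy']
  · rw [hTxv, hTyv]
    rw [Set.disjoint_left]
    rintro z ⟨u, rfl⟩ ⟨u', hz⟩
    have huu : u' = u := by
      have h1 : (u' : Quotient (MulAction.orbitRel Γ V)) = ↑u := by
        rw [← hπf u, ← hπf u', ← hz]
        exact Quotient.sound ⟨g, smul_inv_smul g (f u')⟩
      exact Subtype.ext h1
    rw [huu] at hz
    exact hfree g⁻¹ hgne (f u) hz


end Percolation
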